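/- Let X be a C–D imprimitivity bimodule and m ∈ M(X) with ⟨m,m⟩_C = 1 and ⟨m,m⟩_D = 1. Then the map α : D → C defined by α(d) = ⟨m·d, m⟩_C is a *-isomorphism of C*-algebras; in particular it is multiplicative: ⟨m·(ab), m⟩_C = ⟨m·a, m⟩_C ⟨m·b, m⟩_C for a, b ∈ D. -/
import Mathlib

lemma aux_real_bound {R x : ℝ} (hR : 0 < R) (hx : 0 ≤ x) (hxR : x ≤ R) {n : ℕ} (hn : 0 < n) :
    ‖x * (1 - R⁻¹ * x) ^ (2 * n)‖ ≤ R / n := by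
  have hn' : (0:ℝ) < n := by exact_mod_cast hn
  set t : ℝ := R⁻¹ * x with ht
  have ht0 : 0 ≤ t := mul_nonneg (by positivity) hx
  have ht1 : t ≤ 1 := by
    rw [ht, inv_mul_le_iff₀ hR]
    linarith
  have h1t : 0 ≤ 1 - t := by linarith
  have hxt : x = R * t := by
    rw [ht, ← mul_assoc, mul_inv_cancel₀ hR.ne', one_mul]
  have hexp : (1 - t) ≤ Real.exp (-t) := by
    have := Real.add_one_le_exp (-t); linarith
  have hpow : (1 - t) ^ (2*n) ≤ Real.exp (-t) ^ (2*n) := pow_le_pow_left₀ h1t hexp _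
  have hexppow : Real.exp (-t) ^ (2*n) = Real.exp (-(2*(n:ℝ)*t)) := by
    rw [← Real.exp_nat_mul]
    push_cast
    ring_nf
  have hinv : Real.exp (-(2*(n:ℝ)*t)) ≤ (1 + 2*(n:ℝ)*t)⁻¹ := by
    rw [Real.exp_neg]
    have h1 : 1 + 2*(n:ℝ)*t ≤ Real.exp (2*(n:ℝ)*t) := by
      have := Real.add_one_le_exp (2*(n:ℝ)*t); linarith
    have h2 : (0:ℝ) < 1 + 2*(n:ℝ)*t := by positivity
    exact inv_anti₀ h2 h1
  have hkey : t * (1 + 2*(n:ℝ)*t)⁻¹ ≤ (2*(n:ℝ))⁻¹ := by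
    rw [← div_eq_mul_inv, ← one_div, div_le_div_iff₀ (by positivity) (by positivity)]
    nlinarith
  have habs : ‖x * (1 - R⁻¹ * x) ^ (2 * n)‖ = x * (1 - t) ^ (2*n) := by
    rw [Real.norm_eq_abs, abs_of_nonneg (mul_nonneg hx (pow_nonneg h1t _))]
  rw [habs, hxt]
  calc R * t * (1 - t)^(2*n) ≤ R * t * ((1 + 2*(n:ℝ)*t)⁻¹) := by
        have := hpow.trans (hexppow ▸ hinv)
        exact mul_le_mul_of_nonneg_left this (by positivity)
    _ = R * (t * (1 + 2*(n:ℝ)*t)⁻¹) := by ring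
    _ ≤ R * (2*(n:ℝ))⁻¹ := mul_le_mul_of_nonneg_left hkey hR.le
    _ ≤ R / n := by
        rw [div_eq_mul_inv]
        have : ((n:ℝ))⁻¹ ≤ (n:ℝ)⁻¹ := le_refl _
        have h2 : (2*(n:ℝ))⁻¹ ≤ (n:ℝ)⁻¹ := by
          apply inv_anti₀ hn'
          nlinarith
        exact mul_le_mul_of_nonneg_left h2 hR.le


lemma core_bound {E : Type*} [CStarAlgebra E] (z : E) (hz : z ≠ 0) {n : ℕ} (hn : 0 < n) :
    ‖z - z * (1 - (1 - ‖star z * z‖⁻¹ • (star z * z)) ^ n)‖ ^ 2 ≤ ‖star z * z‖ / n := by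
  haveI : Nontrivial E := nontrivial_of_ne z 0 hz
  set a : E := star z * z with ha_def
  have ha : IsSelfAdjoint a := IsSelfAdjoint.star_mul_self z
  have hR : 0 < ‖a‖ := by
    rw [ha_def, CStarRing.norm_star_mul_self]
    have : 0 < ‖z‖ := norm_pos_iff.mpr hz
    positivity
  set b : E := 1 - ‖a‖⁻¹ • a with hb_def
  have hb : IsSelfAdjoint b := (IsSelfAdjoint.one (R := E)).sub (IsSelfAdjoint.smul (star_trivial _) ha)
  have hzz : z - z * (1 - b ^ n) = z * b ^ n := by noncomm_ring
  have hcomm : Commute a b := ((Commute.one_right a).sub_right ((Commute.refl a).smul_right _))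
  have hstar : star (z * b ^ n) * (z * b ^ n) = a * b ^ (2 * n) := by
    rw [star_mul, (hb.pow n).star_eq]
    calc b ^ n * star z * (z * b ^ n) = b ^ n * a * b ^ n := by rw [ha_def]; noncomm_ring
      _ = a * b ^ n * b ^ n := by rw [(hcomm.pow_right n).symm.eq]
      _ = a * b ^ (2*n) := by rw [mul_assoc, ← pow_add, two_mul]
  have hcfc : a * b ^ (2*n) = cfc (fun x : ℝ => x * (1 - ‖a‖⁻¹ * x) ^ (2*n)) a := by
    rw [cfc_mul _ _ a, cfc_pow _ _ a, cfc_sub _ _ a, cfc_const_one ℝ a,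
      cfc_const_mul_id _ a, cfc_id' ℝ a, hb_def]
  have hnorm : ‖a * b ^ (2*n)‖ ≤ ‖a‖ / n := by
    rw [hcfc]
    refine norm_cfc_le (by positivity) fun x hx => ?_
    have hx0 : 0 ≤ x := spectrum_star_mul_self_nonneg x (ha_def ▸ hx)
    have hxR : x ≤ ‖a‖ := by
      have := spectrum.norm_le_norm_of_mem hx
      rwa [Real.norm_eq_abs, abs_of_nonneg hx0] at this
    exact aux_real_bound hR hx0 hxR hn
  calc ‖z - z * (1 - b ^ n)‖ ^ 2 = ‖star (z * b ^ n) * (z * b ^ n)‖ := by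
        rw [hzz, sq, ← CStarRing.norm_star_mul_self]
    _ = ‖a * b ^ (2*n)‖ := by rw [hstar]
    _ ≤ ‖a‖ / n := hnorm

/-- Let `X` be a `C`–`D` imprimitivity bimodule (realised concretely inside an ambient
C*-algebra `E`, with `C = closed span (X X*)`, `D = closed span (X* X)`), and let `m`
be a multiplier of `X` with `⟨m,m⟩_C = 1` and `⟨m,m⟩_D = 1`.  Then
`α : d ↦ ⟨m·d, m⟩_C = m d m*` is a *-isomorphism of `D` onto `C`; in particular it is
multiplicative: `⟨m·(ab), m⟩_C = ⟨m·a, m⟩_C ⟨m·b, m⟩_C` for `a, b ∈ D`. -/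
theorem stmt_17 {E : Type*} [NormedRing E] [StarRing E] [CStarRing E] [NormedAlgebra ℂ E]
    [CompleteSpace E] [StarModule ℂ E]
    (X : Submodule ℂ E) (hXc : IsClosed (X : Set E))
    (hXXX : ∀ x ∈ X, ∀ y ∈ X, ∀ z ∈ X, x * star y * z ∈ X)
    (C : Set E) (hC : C = closure (Submodule.span ℂ {w : E | ∃ x ∈ X, ∃ y ∈ X, w = x * star y} : Set E))
    (D : Set E) (hD : D = closure (Submodule.span ℂ {w : E | ∃ x ∈ X, ∃ y ∈ X, w = star x * y} : Set E))
    (m : E) (hCm : ∀ c ∈ C, c * m ∈ X) (hmD : ∀ d ∈ D, m * d ∈ X)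
    (hmmC : ∀ c ∈ C, c * (m * star m) = c)
    (hmmD : ∀ d ∈ D, (star m * m) * d = d) :
    Set.BijOn (fun d => (m * d) * star m) D C ∧
    (∀ a ∈ D, ∀ b ∈ D, (m * (a + b)) * star m = (m * a) * star m + (m * b) * star m) ∧
    (∀ a ∈ D, (m * star a) * star m = star ((m * a) * star m)) ∧
    (∀ a ∈ D, ∀ b ∈ D, (m * (a * b)) * star m = ((m * a) * star m) * ((m * b) * star m)) := by
  letI : CStarAlgebra E := ⟨⟩
  set SC : Set E := {w : E | ∃ x ∈ X, ∃ y ∈ X, w = x * star y} with hSC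
  set SD : Set E := {w : E | ∃ x ∈ X, ∃ y ∈ X, w = star x * y} with hSD
  -- closedness
  have hCcl : IsClosed C := hC ▸ isClosed_closure
  have hDcl : IsClosed D := hD ▸ isClosed_closure
  -- submodule structure
  have hC0 : (0:E) ∈ C := hC ▸ subset_closure (Submodule.zero_mem _)
  have hD0 : (0:E) ∈ D := hD ▸ subset_closure (Submodule.zero_mem _)
  have hCadd : ∀ u ∈ C, ∀ v ∈ C, u + v ∈ C := by
    intro u hu v hv
    rw [hC] at hu hv ⊢
    rw [← Submodule.topologicalClosure_coe] at hu hv ⊢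
    exact add_mem hu hv
  have hDsub : ∀ u ∈ D, ∀ v ∈ D, u - v ∈ D := by
    intro u hu v hv
    rw [hD] at hu hv ⊢
    rw [← Submodule.topologicalClosure_coe] at hu hv ⊢
    exact sub_mem hu hv
  have hDadd : ∀ u ∈ D, ∀ v ∈ D, u + v ∈ D := by
    intro u hu v hv
    rw [hD] at hu hv ⊢
    rw [← Submodule.topologicalClosure_coe] at hu hv ⊢
    exact add_mem hu hv
  have hCsub : ∀ u ∈ C, ∀ v ∈ C, u - v ∈ C := by
    intro u hu v hv
    rw [hC] at hu hv ⊢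
    rw [← Submodule.topologicalClosure_coe] at hu hv ⊢
    exact sub_mem hu hv
  have hDsmul : ∀ (r : ℝ), ∀ u ∈ D, r • u ∈ D := by
    intro r u hu
    rw [← Complex.coe_smul]
    rw [hD] at hu ⊢
    rw [← Submodule.topologicalClosure_coe] at hu ⊢
    exact Submodule.smul_mem _ _ hu
  have hCsmul : ∀ (r : ℝ), ∀ u ∈ C, r • u ∈ C := by
    intro r u hu
    rw [← Complex.coe_smul]
    rw [hC] at hu ⊢
    rw [← Submodule.topologicalClosure_coe] at hu ⊢
    exact Submodule.smul_mem _ _ hu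
  -- star closedness
  have hDstar : ∀ d ∈ D, star d ∈ D := by
    intro d hd
    rw [hD] at hd ⊢
    refine map_mem_closure continuous_star hd ?_
    intro u hu
    induction hu using Submodule.span_induction with
    | mem w hw =>
      obtain ⟨x, hx, y, hy, rfl⟩ := hw
      exact Submodule.subset_span ⟨y, hy, x, hx, by rw [star_mul, star_star]⟩
    | zero => simpa using Submodule.zero_mem _
    | add u v _ _ hu' hv' => rw [star_add]; exact add_mem hu' hv'
    | smul c u _ hu' => rw [star_smul]; exact Submodule.smul_mem _ _ hu'
  have hCstar : ∀ c ∈ C, star c ∈ C := by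
    intro c hc
    rw [hC] at hc ⊢
    refine map_mem_closure continuous_star hc ?_
    intro u hu
    induction hu using Submodule.span_induction with
    | mem w hw =>
      obtain ⟨x, hx, y, hy, rfl⟩ := hw
      exact Submodule.subset_span ⟨y, hy, x, hx, by rw [star_mul, star_star]⟩
    | zero => simpa using Submodule.zero_mem _
    | add u v _ _ hu' hv' => rw [star_add]; exact add_mem hu' hv'
    | smul c u _ hu' => rw [star_smul]; exact Submodule.smul_mem _ _ hu'
  -- multiplication lemmas
  have hmulD : ∀ u ∈ X, ∀ v ∈ X, ∀ d ∈ D, d * (star u * v) ∈ D := by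
    intro u hu v hv d hd
    rw [hD] at hd ⊢
    refine map_mem_closure (f := (· * (star u * v))) (continuous_mul_right _) hd ?_
    intro w hw
    induction hw using Submodule.span_induction with
    | mem w' hw' =>
      obtain ⟨x, hx, y, hy, rfl⟩ := hw'
      refine Submodule.subset_span ⟨x, hx, y * star u * v, hXXX y hy u hu v hv, ?_⟩
      noncomm_ring
    | zero => simpa using Submodule.zero_mem _
    | add p q _ _ hp hq => simp only [add_mul]; exact add_mem hp hq
    | smul c p _ hp => simp only [smul_mul_assoc]; exact Submodule.smul_mem _ _ hp
  have hmulC : ∀ u ∈ X, ∀ v ∈ X, ∀ c ∈ C, c * (u * star v) ∈ C := by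
    intro u hu v hv c hc
    rw [hC] at hc ⊢
    refine map_mem_closure (f := (· * (u * star v))) (continuous_mul_right _) hc ?_
    intro w hw
    induction hw using Submodule.span_induction with
    | mem w' hw' =>
      obtain ⟨x, hx, y, hy, rfl⟩ := hw'
      refine Submodule.subset_span ⟨x * star y * u, hXXX x hx y hy u hu, v, hv, ?_⟩
      noncomm_ring
    | zero => simpa using Submodule.zero_mem _
    | add p q _ _ hp hq => simp only [add_mul]; exact add_mem hp hq
    | smul c' p _ hp => simp only [smul_mul_assoc]; exact Submodule.smul_mem _ _ hp
  -- the key approximation lemmas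
  have hA : ∀ z ∈ X, z * star m ∈ C := by
    intro z hz
    by_cases hz0 : z = 0
    · rw [hz0, zero_mul]; exact hC0
    set a : E := star z * z with ha_def
    have haD : a ∈ D := hD ▸ subset_closure (Submodule.subset_span ⟨z, hz, z, hz, rfl⟩)
    have hdmem : ∀ k : ℕ, (1 : E) - (1 - ‖a‖⁻¹ • a) ^ k ∈ D := by
      intro k
      induction k with
      | zero => simpa using hD0
      | succ k ih =>
        have key : (1:E) - (1 - ‖a‖⁻¹ • a) ^ (k+1)
            = (1 - (1 - ‖a‖⁻¹ • a) ^ k)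
              + (‖a‖⁻¹ : ℝ) • (a - (1 - (1 - ‖a‖⁻¹ • a) ^ k) * a) := by
          have h1 : (‖a‖⁻¹ : ℝ) • (a - (1 - (1 - ‖a‖⁻¹ • a) ^ k) * a)
              = (1 - ‖a‖⁻¹ • a) ^ k * (‖a‖⁻¹ • a) := by
            rw [show a - (1 - (1 - ‖a‖⁻¹ • a) ^ k) * a = (1 - ‖a‖⁻¹ • a) ^ k * a from by
              noncomm_ring]
            exact (mul_smul_comm _ _ _).symm
          rw [h1, pow_succ]
          generalize (‖a‖⁻¹ : ℝ) • a = s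
          noncomm_ring
        rw [key]
        refine hDadd _ ih _ (hDsmul _ _ (hDsub _ haD _ ?_))
        exact ha_def ▸ hmulD z hz z hz _ ih
    have hmem : z * star m ∈ closure C := by
      rw [Metric.mem_closure_iff]
      intro ε hε
      set δ : ℝ := ε / (‖m‖ + 1) with hδ
      have hδ0 : 0 < δ := by positivity
      have hR : 0 < ‖a‖ := by
        rw [ha_def, CStarRing.norm_star_mul_self]
        have : 0 < ‖z‖ := norm_pos_iff.mpr hz0
        positivity
      obtain ⟨n, hn⟩ := exists_nat_gt (‖a‖ / δ ^ 2)
      have hn0 : 0 < n := by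
        rcases Nat.eq_zero_or_pos n with h0 | h0
        · subst h0
          simp only [Nat.cast_zero] at hn
          exact absurd hn (not_lt.mpr (by positivity))
        · exact h0
      have hcb := core_bound z hz0 hn0
      set d : E := 1 - (1 - ‖a‖⁻¹ • a) ^ n with hd_def
      have hdD : d ∈ D := hdmem n
      have hdist : ‖z - z * d‖ < δ := by
        have hn' : (0:ℝ) < n := by exact_mod_cast hn0
        have h1 : ‖z - z * d‖ ^ 2 < δ ^ 2 := by
          refine lt_of_le_of_lt hcb ?_
          rw [div_lt_iff₀ hn']
          rw [div_lt_iff₀ (by positivity)] at hn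
          linarith
        exact lt_of_pow_lt_pow_left₀ 2 hδ0.le h1
      refine ⟨(z * d) * star m, ?_, ?_⟩
      · have hw : m * star d ∈ X := hmD _ (hDstar d hdD)
        have heq : (z * d) * star m = z * star (m * star d) := by
          rw [star_mul, star_star, mul_assoc]
        rw [heq, hC]
        exact subset_closure (Submodule.subset_span ⟨z, hz, m * star d, hw, rfl⟩)
      · rw [dist_eq_norm]
        have heq : z * star m - (z * d) * star m = (z - z * d) * star m := by noncomm_ring
        rw [heq]
        calc ‖(z - z * d) * star m‖ ≤ ‖z - z * d‖ * ‖star m‖ := norm_mul_le _ _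
          _ ≤ δ * ‖m‖ := by
              rw [norm_star]
              exact mul_le_mul_of_nonneg_right hdist.le (norm_nonneg m)
          _ < δ * (‖m‖ + 1) := by
              exact mul_lt_mul_of_pos_left (lt_add_one _) hδ0
          _ = ε := by
              rw [hδ]; field_simp
    rwa [hCcl.closure_eq] at hmem
  have hB : ∀ z ∈ X, star m * z ∈ D := by
    intro z hz
    by_cases hz0 : z = 0
    · rw [hz0, mul_zero]; exact hD0
    set a : E := z * star z with ha_def
    have haC : a ∈ C := hC ▸ subset_closure (Submodule.subset_span ⟨z, hz, z, hz, rfl⟩)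
    have ha : IsSelfAdjoint a := IsSelfAdjoint.mul_star_self z
    have hwsa : ∀ k : ℕ, IsSelfAdjoint ((1 : E) - (1 - ‖a‖⁻¹ • a) ^ k) := by
      intro k
      exact (IsSelfAdjoint.one (R := E)).sub
        (((IsSelfAdjoint.one (R := E)).sub (IsSelfAdjoint.smul (star_trivial _) ha)).pow k)
    have hdmem : ∀ k : ℕ, (1 : E) - (1 - ‖a‖⁻¹ • a) ^ k ∈ C := by
      intro k
      induction k with
      | zero => simpa using hC0
      | succ k ih =>
        have key : (1:E) - (1 - ‖a‖⁻¹ • a) ^ (k+1)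
            = (1 - (1 - ‖a‖⁻¹ • a) ^ k)
              + (‖a‖⁻¹ : ℝ) • (a - (1 - (1 - ‖a‖⁻¹ • a) ^ k) * a) := by
          have h1 : (‖a‖⁻¹ : ℝ) • (a - (1 - (1 - ‖a‖⁻¹ • a) ^ k) * a)
              = (1 - ‖a‖⁻¹ • a) ^ k * (‖a‖⁻¹ • a) := by
            rw [show a - (1 - (1 - ‖a‖⁻¹ • a) ^ k) * a = (1 - ‖a‖⁻¹ • a) ^ k * a from by
              noncomm_ring]
            exact (mul_smul_comm _ _ _).symm
          rw [h1, pow_succ]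
          generalize (‖a‖⁻¹ : ℝ) • a = s
          noncomm_ring
        rw [key]
        refine hCadd _ ih _ (hCsmul _ _ (hCsub _ haC _ ?_))
        exact ha_def ▸ hmulC z hz z hz _ ih
    have hmem : star m * z ∈ closure D := by
      rw [Metric.mem_closure_iff]
      intro ε hε
      set δ : ℝ := ε / (‖m‖ + 1) with hδ
      have hδ0 : 0 < δ := by positivity
      have hR : 0 < ‖a‖ := by
        rw [ha_def, CStarRing.norm_self_mul_star]
        have : 0 < ‖z‖ := norm_pos_iff.mpr hz0
        positivity
      obtain ⟨n, hn⟩ := exists_nat_gt (‖a‖ / δ ^ 2)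
      have hn0 : 0 < n := by
        rcases Nat.eq_zero_or_pos n with h0 | h0
        · subst h0
          simp only [Nat.cast_zero] at hn
          exact absurd hn (not_lt.mpr (by positivity))
        · exact h0
      have hz0' : star z ≠ 0 := star_ne_zero.mpr hz0
      have hcb := core_bound (star z) hz0' hn0
      simp only [star_star] at hcb
      rw [← ha_def] at hcb
      set w : E := 1 - (1 - ‖a‖⁻¹ • a) ^ n with hw_def
      have hwC : w ∈ C := hdmem n
      have hwsa' : IsSelfAdjoint w := hwsa n
      have hdist : ‖z - w * z‖ < δ := by
        have hn' : (0:ℝ) < n := by exact_mod_cast hn0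
        have heq : z - w * z = star (star z - star z * w) := by
          rw [star_sub, star_mul, star_star, hwsa'.star_eq]
        have h1 : ‖z - w * z‖ ^ 2 < δ ^ 2 := by
          rw [heq, norm_star]
          refine lt_of_le_of_lt hcb ?_
          rw [div_lt_iff₀ hn']
          rw [div_lt_iff₀ (by positivity)] at hn
          linarith
        exact lt_of_pow_lt_pow_left₀ 2 hδ0.le h1
      refine ⟨star m * (w * z), ?_, ?_⟩
      · have hx : w * m ∈ X := hCm w hwC
        have heq : star m * (w * z) = star (w * m) * z := by
          rw [star_mul, hwsa'.star_eq, mul_assoc]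
        rw [heq, hD]
        exact subset_closure (Submodule.subset_span ⟨w * m, hx, z, hz, rfl⟩)
      · rw [dist_eq_norm]
        have heq : star m * z - star m * (w * z) = star m * (z - w * z) := by noncomm_ring
        rw [heq]
        calc ‖star m * (z - w * z)‖ ≤ ‖star m‖ * ‖z - w * z‖ := norm_mul_le _ _
          _ ≤ ‖m‖ * δ := by
              rw [norm_star]
              exact mul_le_mul_of_nonneg_left hdist.le (norm_nonneg m)
          _ < (‖m‖ + 1) * δ := by
              exact mul_lt_mul_of_pos_right (lt_add_one _) hδ0
          _ = ε := by
              rw [hδ]; field_simp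
    rwa [hDcl.closure_eq] at hmem
  -- derived identities
  have hmmD' : ∀ d ∈ D, d * (star m * m) = d := by
    intro d hd
    have h1 := hmmD (star d) (hDstar d hd)
    have h2 := congrArg star h1
    simp only [star_mul, star_star] at h2
    exact h2
  have hmmC' : ∀ c ∈ C, (m * star m) * c = c := by
    intro c hc
    have h1 := hmmC (star c) (hCstar c hc)
    have h2 := congrArg star h1
    simp only [star_mul, star_star] at h2
    exact h2
  refine ⟨⟨?_, ?_, ?_⟩, ?_, ?_, ?_⟩
  · -- MapsTo
    intro d hd
    exact hA (m * d) (hmD d hd)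
  · -- InjOn
    intro a ha b hb h
    have h' : (m * a) * star m = (m * b) * star m := h
    have e : ∀ x : E, (star m * m) * x * (star m * m) = star m * ((m * x) * star m) * m := by
      intro x; noncomm_ring
    calc a = a * (star m * m) := (hmmD' a ha).symm
      _ = (star m * m) * a * (star m * m) := by rw [hmmD a ha]
      _ = star m * ((m * a) * star m) * m := e a
      _ = star m * ((m * b) * star m) * m := by rw [h']
      _ = (star m * m) * b * (star m * m) := (e b).symm
      _ = b * (star m * m) := by rw [hmmD b hb]
      _ = b := hmmD' b hb
  · -- SurjOn
    intro c hc
    refine ⟨star m * (c * m), hB (c * m) (hCm c hc), ?_⟩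
    show (m * (star m * (c * m))) * star m = c
    have h1 : m * (star m * (c * m)) = ((m * star m) * c) * m := by noncomm_ring
    rw [h1, hmmC' c hc, mul_assoc, hmmC c hc]
  · -- additive
    intro a _ b _
    rw [mul_add, add_mul]
  · -- star
    intro a _
    simp only [star_mul, star_star, mul_assoc]
  · -- multiplicative
    intro a ha b hb
    have hb' := hmmD b hb
    calc (m * (a * b)) * star m = (m * (a * ((star m * m) * b))) * star m := by rw [hb']
      _ = ((m * a) * star m) * ((m * b) * star m) := by noncomm_ring
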